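/- Let a < b be real numbers, let f : [a,b] → ℝ be twice differentiable with a real constant M such that f''(x) ≤ M for all x ∈ [a,b], and let g : [a,b] → [0,1] be integrable and symmetric about (a+b)/2 (i.e. g(x) = g(a+b−x) for all x ∈ [a,b]). Then (b−a)·( M(b−a)²/12 − (f(a)+f(b))/2 + (1/(b−a))∫_a^b f(t) dt ) ≥ (M/2)·∫_a^b (t−a)(b−t)g(t) dt − ((f(a)+f(b))/2)·∫_a^b g(t) dt + ∫_a^b f(t)g(t) dt ≥ 0. -/

import Mathlib

open MeasureTheory intervalIntegral

/-- Remark (estimate of precision in (1), upper-bound version): with `f'' ≤ M` on `[a,b]`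
and `g : [a,b] → [0,1]` integrable and symmetric about `(a+b)/2`,
`(b−a)·(M(b−a)²/12 − (f(a)+f(b))/2 + (1/(b−a))∫f)
  ≥ (M/2)·∫(t−a)(b−t)g(t) − ((f(a)+f(b))/2)·∫g + ∫f·g ≥ 0`. -/
theorem fejer_stmt_5 (a b : ℝ) (hab : a < b) (f f' f'' g : ℝ → ℝ) (M : ℝ)
    (hf' : ∀ x ∈ Set.Icc a b, HasDerivWithinAt f (f' x) (Set.Icc a b) x)
    (hf'' : ∀ x ∈ Set.Icc a b, HasDerivWithinAt f' (f'' x) (Set.Icc a b) x)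
    (hM : ∀ x ∈ Set.Icc a b, f'' x ≤ M)
    (hg : IntervalIntegrable g volume a b)
    (hg01 : ∀ x ∈ Set.Icc a b, g x ∈ Set.Icc (0 : ℝ) 1)
    (hgsymm : ∀ x ∈ Set.Icc a b, g x = g (a + b - x)) :
    M / 2 * (∫ t in a..b, (t - a) * (b - t) * g t)
        - (f a + f b) / 2 * (∫ t in a..b, g t) + (∫ t in a..b, f t * g t)
      ≤ (b - a) * (M * (b - a) ^ 2 / 12 - (f a + f b) / 2
          + (1 / (b - a)) * (∫ t in a..b, f t)) ∧
    0 ≤ M / 2 * (∫ t in a..b, (t - a) * (b - t) * g t)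
        - (f a + f b) / 2 * (∫ t in a..b, g t) + (∫ t in a..b, f t * g t) := by
  have hba : (0:ℝ) < b - a := by linarith
  have huIcc : Set.uIcc a b = Set.Icc a b := Set.uIcc_of_le hab.le
  have hrefl : ∀ x ∈ Set.Icc a b, a + b - x ∈ Set.Icc a b := by
    rintro x ⟨h1, h2⟩; exact ⟨by linarith, by linarith⟩
  have hreflo : Set.MapsTo (fun t : ℝ => a + b - t) (Set.Ioo a b) (Set.Ioo a b) := by
    rintro x ⟨h1, h2⟩
    simp only [Set.mem_Ioo]
    exact ⟨by linarith, by linarith⟩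
  set c : ℝ := (f a + f b) / 2 with hc
  set h : ℝ → ℝ := fun t => M / 2 * ((t - a) * (b - t)) - c + f t with hh
  set φ : ℝ → ℝ := fun t => h t + h (a + b - t) with hφ
  -- continuity
  have hfc : ContinuousOn f (Set.Icc a b) := fun x hx => (hf' x hx).continuousWithinAt
  have hreflc : ContinuousOn (fun t : ℝ => a + b - t) (Set.Icc a b) := by fun_prop
  have hhc : ContinuousOn h (Set.Icc a b) := ((by fun_prop : ContinuousOn
      (fun t : ℝ => M / 2 * ((t - a) * (b - t)) - c) (Set.Icc a b))).add hfc
  have hφc : ContinuousOn φ (Set.Icc a b) :=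
    hhc.add (hhc.comp hreflc hrefl)
  have hin : ∀ x : ℝ, HasDerivWithinAt (fun t : ℝ => a + b - t) (-1) (Set.Ioo a b) x := by
    intro x
    exact ((hasDerivAt_const x (a + b)).sub (hasDerivAt_id x)).hasDerivWithinAt.congr_deriv (by ring)
  -- derivative of h within Ioo
  have hhd : ∀ x ∈ Set.Ioo a b, HasDerivWithinAt h (M / 2 * (a + b - 2 * x) + f' x)
      (Set.Ioo a b) x := by
    intro x hx
    have h3 : HasDerivAt (fun t : ℝ => (t - a) * (b - t)) (1 * (b - x) + (x - a) * (0 - 1)) x :=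
      ((hasDerivAt_id x).sub_const a).mul ((hasDerivAt_const x b).sub (hasDerivAt_id x))
    have h1 : HasDerivWithinAt f (f' x) (Set.Ioo a b) x :=
      (hf' x (Set.Ioo_subset_Icc_self hx)).mono Set.Ioo_subset_Icc_self
    have := ((((h3.const_mul (M / 2)).hasDerivWithinAt (s := Set.Ioo a b)).sub_const c).add h1)
    exact this.congr_deriv (by ring)
  -- concavity of φ
  have hφconc : ConcaveOn ℝ (Set.Icc a b) φ := by
    apply concaveOn_of_hasDerivWithinAt2_nonpos (convex_Icc a b) hφc
      (f' := fun x => f' x - f' (a + b - x) + (M * (a + b) - 2 * M * x))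
      (f'' := fun x => f'' x + f'' (a + b - x) - 2 * M)
    · intro x hx
      rw [interior_Icc] at hx ⊢
      have h2 : HasDerivWithinAt (fun t => h (a + b - t))
          ((M / 2 * (a + b - 2 * (a + b - x)) + f' (a + b - x)) * (-1)) (Set.Ioo a b) x :=
        HasDerivWithinAt.comp x (hhd _ (hreflo hx)) (hin x) hreflo
      have := (hhd x hx).add h2
      exact this.congr_deriv (by ring)
    · intro x hx
      rw [interior_Icc] at hx ⊢
      have h1 : HasDerivWithinAt f' (f'' x) (Set.Ioo a b) x :=
        (hf'' x (Set.Ioo_subset_Icc_self hx)).mono Set.Ioo_subset_Icc_self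
      have h2 : HasDerivWithinAt (fun t => f' (a + b - t)) (f'' (a + b - x) * (-1))
          (Set.Ioo a b) x :=
        HasDerivWithinAt.comp x
          ((hf'' _ (Set.Ioo_subset_Icc_self (hreflo hx))).mono Set.Ioo_subset_Icc_self)
          (hin x) hreflo
      have h3 : HasDerivWithinAt (fun t : ℝ => M * (a + b) - 2 * M * t) (-(2 * M))
          (Set.Ioo a b) x := by
        exact ((hasDerivAt_const x (M * (a + b))).sub
          ((hasDerivAt_id x).const_mul (2 * M))).hasDerivWithinAt.congr_deriv (by ring)
      have := (h1.sub h2).add h3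
      exact this.congr_deriv (by ring)
    · intro x hx
      rw [interior_Icc] at hx
      have := hM x (Set.Ioo_subset_Icc_self hx)
      have := hM _ (Set.Ioo_subset_Icc_self (hreflo hx))
      linarith
  -- nonnegativity of φ on Icc
  have hφa : φ a = 0 := by simp [hφ, hh, hc]; ring
  have hφb : φ b = 0 := by simp [hφ, hh, hc]; ring
  have hφ0 : ∀ t ∈ Set.Icc a b, 0 ≤ φ t := by
    rintro t ⟨ht1, ht2⟩
    have hl : (0:ℝ) ≤ (b - t) / (b - a) := div_nonneg (by linarith) hba.le
    have hm : (0:ℝ) ≤ (t - a) / (b - a) := div_nonneg (by linarith) hba.le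
    have hs : (b - t) / (b - a) + (t - a) / (b - a) = 1 := by field_simp; ring
    have := hφconc.2 (Set.left_mem_Icc.2 hab.le) (Set.right_mem_Icc.2 hab.le) hl hm hs
    simp only [smul_eq_mul] at this
    have ht' : (b - t) / (b - a) * a + (t - a) / (b - a) * b = t := by
      field_simp; ring
    rw [ht', hφa, hφb] at this
    simpa using this
  -- integrability
  have hφcont2 : ContinuousOn (fun t => h (a + b - t)) (Set.Icc a b) := hhc.comp hreflc hrefl
  have ihg : IntervalIntegrable (fun t => h t * g t) volume a b :=
    hg.continuousOn_mul (huIcc ▸ hhc)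
  have ihg2 : IntervalIntegrable (fun t => h (a + b - t) * g t) volume a b :=
    hg.continuousOn_mul (huIcc ▸ hφcont2)
  have ih : IntervalIntegrable h volume a b := (huIcc ▸ hhc).intervalIntegrable
  have ih2 : IntervalIntegrable (fun t => h (a + b - t)) volume a b :=
    (huIcc ▸ hφcont2).intervalIntegrable
  have iφg : IntervalIntegrable (fun t => φ t * g t) volume a b := by
    have e : (fun t => φ t * g t) = fun t => h t * g t + h (a + b - t) * g t := by
      funext t; simp only [hφ]; ring
    rw [e]; exact ihg.add ihg2
  -- reflection identities
  have refl1 : (∫ t in a..b, h (a + b - t) * g (a + b - t)) = ∫ t in a..b, h t * g t := by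
    have := intervalIntegral.integral_comp_sub_left (a := a) (b := b)
      (fun t => h t * g t) (a + b)
    simpa using this
  have refl2 : (∫ t in a..b, h (a + b - t) * g t) = ∫ t in a..b, h t * g t := by
    rw [← refl1]
    apply intervalIntegral.integral_congr
    intro x hx
    rw [huIcc] at hx
    dsimp only
    rw [← hgsymm x hx]
  have refl3 : (∫ t in a..b, h (a + b - t)) = ∫ t in a..b, h t := by
    have := intervalIntegral.integral_comp_sub_left (a := a) (b := b) h (a + b)
    simpa using this
  -- ∫ φ g = 2 ∫ h g
  have eφg : (∫ t in a..b, φ t * g t) = 2 * ∫ t in a..b, h t * g t := by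
    have : (∫ t in a..b, φ t * g t)
        = (∫ t in a..b, h t * g t) + ∫ t in a..b, h (a + b - t) * g t := by
      rw [← intervalIntegral.integral_add ihg ihg2]
      apply intervalIntegral.integral_congr
      intro x hx; simp [hφ]; ring
    rw [this, refl2]; ring
  have eφ : (∫ t in a..b, φ t) = 2 * ∫ t in a..b, h t := by
    rw [hφ]
    rw [intervalIntegral.integral_add ih ih2, refl3]; ring
  -- middle expression equals ∫ h g
  have emid : M / 2 * (∫ t in a..b, (t - a) * (b - t) * g t)
      - c * (∫ t in a..b, g t) + (∫ t in a..b, f t * g t)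
      = ∫ t in a..b, h t * g t := by
    have i1 : IntervalIntegrable (fun t => (t - a) * (b - t) * g t) volume a b :=
      hg.continuousOn_mul (g := fun t => (t - a) * (b - t)) (by fun_prop)
    have i2 : IntervalIntegrable (fun t => f t * g t) volume a b :=
      hg.continuousOn_mul (huIcc ▸ hfc)
    have : (∫ t in a..b, h t * g t)
        = ∫ t in a..b, (M / 2 * ((t - a) * (b - t) * g t) - c * g t + f t * g t) := by
      apply intervalIntegral.integral_congr
      intro x hx; simp [hh]; ring
    rw [this, intervalIntegral.integral_add ((i1.const_mul _).sub (hg.const_mul _)) i2,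
      intervalIntegral.integral_sub (i1.const_mul _) (hg.const_mul _),
      intervalIntegral.integral_const_mul, intervalIntegral.integral_const_mul]
  -- value of ∫ h
  have epoly : (∫ t in a..b, (t - a) * (b - t)) = (b - a) ^ 3 / 6 := by
    have hFT : ∀ t ∈ Set.uIcc a b, HasDerivAt
        (fun t : ℝ => -(t ^ 3) / 3 + (a + b) * t ^ 2 / 2 - a * b * t) ((t - a) * (b - t)) t := by
      intro t _
      have h1 := ((hasDerivAt_pow 3 t).neg).div_const 3
      have h2 := ((hasDerivAt_pow 2 t).const_mul (a + b)).div_const 2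
      have h3 := (hasDerivAt_id t).const_mul (a * b)
      exact ((h1.add h2).sub h3).congr_deriv (by push_cast; ring)
    rw [intervalIntegral.integral_eq_sub_of_hasDerivAt hFT
      (((continuous_id.sub continuous_const).mul
        (continuous_const.sub continuous_id)).intervalIntegrable a b)]
    ring
  have eh : (∫ t in a..b, h t) = M / 2 * ((b - a) ^ 3 / 6) - c * (b - a) + ∫ t in a..b, f t := by
    have i1 : IntervalIntegrable (fun t : ℝ => (t - a) * (b - t)) volume a b :=
      ((continuous_id.sub continuous_const).mul
        (continuous_const.sub continuous_id)).intervalIntegrable a b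
    have ifint : IntervalIntegrable f volume a b := (huIcc ▸ hfc).intervalIntegrable
    rw [hh]
    rw [intervalIntegral.integral_add ((i1.const_mul _).sub
        (intervalIntegrable_const)) ifint,
      intervalIntegral.integral_sub (i1.const_mul _) intervalIntegrable_const,
      intervalIntegral.integral_const_mul, epoly]
    simp [smul_eq_mul]
    ring
  -- two inequalities on ∫ φ g
  have ineq1 : 0 ≤ ∫ t in a..b, φ t * g t := by
    apply intervalIntegral.integral_nonneg hab.le
    intro u hu
    exact mul_nonneg (hφ0 u hu) (hg01 u hu).1
  have ineq2 : (∫ t in a..b, φ t * g t) ≤ ∫ t in a..b, φ t := by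
    apply intervalIntegral.integral_mono_on hab.le iφg
      ((huIcc ▸ hφc).intervalIntegrable)
    intro x hx
    calc φ x * g x ≤ φ x * 1 := by
          apply mul_le_mul_of_nonneg_left (hg01 x hx).2 (hφ0 x hx)
      _ = φ x := mul_one _
  -- finish
  have key1 : (∫ t in a..b, h t * g t) ≤ ∫ t in a..b, h t := by
    linarith [ineq2, eφg, eφ]
  have key0 : 0 ≤ ∫ t in a..b, h t * g t := by
    linarith [ineq1, eφg]
  have erhs : (b - a) * (M * (b - a) ^ 2 / 12 - c + (1 / (b - a)) * (∫ t in a..b, f t))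
      = M / 2 * ((b - a) ^ 3 / 6) - c * (b - a) + ∫ t in a..b, f t := by
    field_simp
    ring
  constructor
  · rw [emid, erhs, ← eh]; exact key1
  · rw [emid]; exact key0
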